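/- Let k be a field, V a nonzero k-vector space, R a unital k-subalgebra of End_k(V), and I a two-sided ideal of R that is topologically nilpotent as a set. Suppose there is a family {E_α : α ∈ Ω} of elements of R such that (a) E_αE_α − E_α ∈ I for all α ∈ Ω and E_αE_β ∈ I whenever α ≠ β, and (b) for every T ∈ R and v ∈ V there exist finitely many α₁, …, αₙ ∈ Ω, scalars a₁, …, aₙ ∈ k, and S ∈ I with T(v) = Σᵢ aᵢ E_{αᵢ}(v) + S(v). Then R is triangularizable. -/

import Mathlib

universe u v w

variable {k : Type u} [Field k]

/-- `seqProd f n = f (n-1) * ⋯ * f 1 * f 0`, the composition `Tₙ ⋯ T₂ T₁` of the first `n`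
terms of the sequence `f` (and the identity for `n = 0`). -/
def seqProd {V : Type v} [AddCommGroup V] [Module k V]
    (f : ℕ → Module.End k V) : ℕ → Module.End k V
  | 0 => 1
  | n + 1 => f n * seqProd f n

/-- A subset `X ⊆ End_k(V)` is topologically nilpotent if for every sequence of elements of
`X` and every finite-dimensional subspace `W` of `V`, some initial composition
`Tₙ ⋯ T₂ T₁` annihilates `W`. -/
def IsTopNilpotentSet {V : Type v} [AddCommGroup V] [Module k V]
    (X : Set (Module.End k V)) : Prop :=
  ∀ f : ℕ → Module.End k V, (∀ n, f n ∈ X) →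
    ∀ W : Submodule k V, FiniteDimensional k ↥W →
      ∃ n : ℕ, 0 < n ∧ ∀ w ∈ W, seqProd f n w = 0

lemma exists_annihilated {V : Type v} [AddCommGroup V] [Module k V]
    {X : Set (Module.End k V)} (hX : IsTopNilpotentSet X)
    (U : Submodule k V) {v0 : V} (hv0 : v0 ∉ U) :
    ∃ w : V, w ∉ U ∧ ∀ T ∈ X, T w ∈ U := by
  by_contra hcon
  push_neg at hcon
  choose F hF1 hF2 using hcon
  let wseq : ℕ → {x : V // x ∉ U} := fun n =>
    Nat.rec ⟨v0, hv0⟩ (fun _ p => ⟨F p.1 p.2 p.1, hF2 p.1 p.2⟩) n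
  let f : ℕ → Module.End k V := fun n => F (wseq n).1 (wseq n).2
  have hrec : ∀ n, seqProd f n v0 = (wseq n).1 := by
    intro n
    induction n with
    | zero => rfl
    | succ n ih =>
      show (f n * seqProd f n) v0 = _
      rw [Module.End.mul_apply, ih]
  obtain ⟨n, hn, hzero⟩ := hX f (fun n => hF1 _ _) (Submodule.span k {v0})
    (FiniteDimensional.span_of_finite k (Set.finite_singleton v0))
  have h0 := hzero v0 (Submodule.mem_span_singleton_self v0)
  rw [hrec n] at h0
  exact (wseq n).2 (by rw [h0]; exact U.zero_mem)

lemma li_aux {V : Type v} [AddCommGroup V] [Module k V] {ι : Type*} [LinearOrder ι]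
    {v : ι → V} (h : ∀ i, v i ∉ Submodule.span k (v '' Set.Iio i)) :
    LinearIndependent k v := by
  rw [linearIndependent_iff']
  intro s g hsum i hi
  by_contra hgi
  classical
  set t := s.filter fun j => g j ≠ 0 with ht
  have htne : t.Nonempty := ⟨i, Finset.mem_filter.2 ⟨hi, hgi⟩⟩
  set j := t.max' htne with hj
  have hjt : j ∈ t := t.max'_mem htne
  have hgj : g j ≠ 0 := (Finset.mem_filter.1 hjt).2
  have hsum' : ∑ x ∈ t, g x • v x = 0 := by
    calc ∑ x ∈ t, g x • v x = ∑ x ∈ s, g x • v x := by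
          apply Finset.sum_subset (Finset.filter_subset _ _)
          intro x hx hxt
          have hgx : g x = 0 := by
            by_contra hgx; exact hxt (Finset.mem_filter.2 ⟨hx, hgx⟩)
          rw [hgx, zero_smul]
      _ = 0 := hsum
  have hterm : g j • v j + ∑ x ∈ t.erase j, g x • v x = 0 := by
    rw [Finset.add_sum_erase t (fun x => g x • v x) hjt]; exact hsum'
  have h1 : g j • v j = -∑ x ∈ t.erase j, g x • v x := eq_neg_of_add_eq_zero_left hterm
  have hvj : v j = (-(g j)⁻¹) • ∑ x ∈ t.erase j, g x • v x := by
    calc v j = (g j)⁻¹ • (g j • v j) := by rw [smul_smul, inv_mul_cancel₀ hgj, one_smul]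
      _ = (g j)⁻¹ • (-∑ x ∈ t.erase j, g x • v x) := by rw [h1]
      _ = (-(g j)⁻¹) • ∑ x ∈ t.erase j, g x • v x := by rw [smul_neg, neg_smul]
  apply h j
  rw [hvj]
  apply Submodule.smul_mem
  apply Submodule.sum_mem
  intro x hx
  apply Submodule.smul_mem
  apply Submodule.subset_span
  refine ⟨x, ?_, rfl⟩
  exact lt_of_le_of_ne (t.le_max' x (Finset.mem_of_mem_erase hx)) (Finset.ne_of_mem_erase hx)

lemma eig_aux {V : Type v} [AddCommGroup V] [Module k V]
    (R : Subalgebra k (Module.End k V)) (I : TwoSidedIdeal R)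
    (hI : IsTopNilpotentSet
      {T : Module.End k V | ∃ S : R, S ∈ I ∧ (S : Module.End k V) = T})
    {Ω : Type w} (E : Ω → R)
    (ha1 : ∀ α : Ω, E α * E α - E α ∈ I)
    (ha2 : ∀ α β : Ω, α ≠ β → E α * E β ∈ I)
    (hb : ∀ (T : R) (v : V), ∃ (m : ℕ) (α : Fin m → Ω) (a : Fin m → k) (S : R),
      S ∈ I ∧ (T : Module.End k V) v =
        (∑ i : Fin m, a i • (E (α i) : Module.End k V) v) + (S : Module.End k V) v)
    (U : Submodule k V) (hU : U ≠ ⊤) :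
    ∃ u : V, u ∉ U ∧ ∀ T ∈ (R : Set (Module.End k V)),
      T u ∈ U ⊔ Submodule.span k {u} := by
  obtain ⟨v0, hv0⟩ : ∃ x : V, x ∉ U := by
    by_contra h; push_neg at h; exact hU (Submodule.eq_top_iff'.2 h)
  obtain ⟨w, hwU, hwI⟩ := exists_annihilated hI U hv0
  have hIw : ∀ S : R, S ∈ I → (S : Module.End k V) w ∈ U := fun S hS => hwI _ ⟨S, hS, rfl⟩
  have hα : ∃ α : Ω, (E α : Module.End k V) w ∉ U := by
    by_contra h; push_neg at h
    apply hwU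
    obtain ⟨m, β, a, S, hS, heq⟩ := hb 1 w
    have h1 : ((1 : R) : Module.End k V) w = w := by simp
    rw [h1] at heq
    rw [heq]
    exact Submodule.add_mem _
      (Submodule.sum_mem _ fun i _ => Submodule.smul_mem _ _ (h (β i))) (hIw S hS)
  obtain ⟨α, huU⟩ := hα
  refine ⟨(E α : Module.End k V) w, huU, ?_⟩
  intro T hT
  obtain ⟨m, β, a, S, hS, heq⟩ := hb ⟨T, hT⟩ ((E α : Module.End k V) w)
  have hcoe : ((⟨T, hT⟩ : R) : Module.End k V) = T := rfl
  rw [hcoe] at heq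
  rw [heq]
  set u := (E α : Module.End k V) w with hu
  have hmul : ∀ S' : R, ((S' * E α : R) : Module.End k V) w = (S' : Module.End k V) u := by
    intro S'
    rw [hu]
    simp [Module.End.mul_apply]
  have hIu : ∀ S' : R, S' ∈ I → (S' : Module.End k V) u ∈ U := fun S' hS' =>
    hmul S' ▸ hIw _ (I.mul_mem_right _ _ hS')
  have hEu : ∀ i : Fin m, (E (β i) : Module.End k V) u ∈ U ⊔ Submodule.span k {u} := by
    intro i
    by_cases hcase : β i = α
    · have h3 : (E (β i) : Module.End k V) u
          = ((E (β i) * E (β i) - E (β i) : R) : Module.End k V) w + u := by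
        rw [hcase, hu]
        simp [LinearMap.sub_apply, Module.End.mul_apply]
      rw [h3]
      exact Submodule.add_mem _ (Submodule.mem_sup_left (hIw _ (ha1 (β i))))
        (Submodule.mem_sup_right (Submodule.mem_span_singleton_self u))
    · have h3 : (E (β i) : Module.End k V) u = ((E (β i) * E α : R) : Module.End k V) w :=
        (hmul _).symm
      rw [h3]
      exact Submodule.mem_sup_left (hIw _ (ha2 _ _ hcase))
  exact Submodule.add_mem _
    (Submodule.sum_mem _ fun i _ => Submodule.smul_mem _ _ (hEu i))
    (Submodule.mem_sup_left (hIu S hS))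

/-- a unital `k`-subalgebra `R` of `End_k(V)` having a topologically
nilpotent two-sided ideal `I` and a family of elements that are orthogonal idempotents
modulo `I` and, together with `I`, span `R` pointwise, is triangularizable. -/
theorem stmt_13 {V : Type v} [AddCommGroup V] [Module k V] [Nontrivial V]
    (R : Subalgebra k (Module.End k V)) (I : TwoSidedIdeal R)
    (hI : IsTopNilpotentSet
      {T : Module.End k V | ∃ S : R, S ∈ I ∧ (S : Module.End k V) = T})
    {Ω : Type w} (E : Ω → R)
    (ha1 : ∀ α : Ω, E α * E α - E α ∈ I)
    (ha2 : ∀ α β : Ω, α ≠ β → E α * E β ∈ I)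
    (hb : ∀ (T : R) (v : V), ∃ (m : ℕ) (α : Fin m → Ω) (a : Fin m → k) (S : R),
      S ∈ I ∧ (T : Module.End k V) v =
        (∑ i : Fin m, a i • (E (α i) : Module.End k V) v) + (S : Module.End k V) v) :
    ∃ (ι : Type v) (lo : LinearOrder ι), WellFounded lo.lt ∧
      ∃ b : Module.Basis ι k V, ∀ T ∈ (R : Set (Module.End k V)), ∀ i : ι,
        T (b i) ∈ Submodule.span k (⇑b '' {j | lo.le j i}) := by
  classical
  have hsel0 : ∀ U : Submodule k V, ∃ u : V, U ≠ ⊤ → u ∉ U ∧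
      ∀ T ∈ (R : Set (Module.End k V)), T u ∈ U ⊔ Submodule.span k {u} := by
    intro U
    by_cases h : U = ⊤
    · exact ⟨0, fun h' => absurd h h'⟩
    · obtain ⟨u, h1, h2⟩ := eig_aux R I hI E ha1 ha2 hb U h
      exact ⟨u, fun _ => ⟨h1, h2⟩⟩
  choose sel hsel using hsel0
  obtain ⟨vfun, hveq⟩ : ∃ f : Ordinal.{v} → V,
      ∀ o, f o = sel (Submodule.span k (f '' Set.Iio o)) := by
    refine ⟨Ordinal.lt_wf.fix
      (fun o ih => sel (Submodule.span k {x : V | ∃ o', ∃ h : o' < o, ih o' h = x})),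
      fun o => ?_⟩
    rw [WellFounded.fix_eq]
    congr 2
    ext x
    simp only [Set.mem_setOf_eq, Set.mem_image, Set.mem_Iio]
    constructor
    · rintro ⟨o', h', rfl⟩; exact ⟨o', h', rfl⟩
    · rintro ⟨o', h', rfl⟩; exact ⟨o', h', rfl⟩
  have hkey : ∀ o : Ordinal.{v}, Submodule.span k (vfun '' Set.Iio o) ≠ ⊤ →
      vfun o ∉ Submodule.span k (vfun '' Set.Iio o) ∧
      ∀ T ∈ (R : Set (Module.End k V)), T (vfun o) ∈
        Submodule.span k (vfun '' Set.Iio o) ⊔ Submodule.span k {vfun o} := by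
    intro o h
    rw [hveq o]
    exact hsel _ h
  have hmem : ∀ {o₁ o₂ : Ordinal.{v}}, o₁ < o₂ →
      vfun o₁ ∈ Submodule.span k (vfun '' Set.Iio o₂) :=
    fun h => Submodule.subset_span ⟨_, h, rfl⟩
  have hex : ∃ o : Ordinal.{v}, Submodule.span k (vfun '' Set.Iio o) = ⊤ := by
    by_contra hcon
    push_neg at hcon
    apply not_injective_of_ordinal vfun
    have hne : ∀ {o₁ o₂ : Ordinal.{v}}, o₁ < o₂ → vfun o₁ ≠ vfun o₂ := by
      intro o₁ o₂ h heq
      exact (hkey o₂ (hcon o₂)).1 (heq ▸ hmem h)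
    intro o₁ o₂ heq
    rcases lt_trichotomy o₁ o₂ with h | h | h
    · exact absurd heq (hne h)
    · exact h
    · exact absurd heq.symm (hne h)
  set O := Ordinal.lt_wf.min {o : Ordinal.{v} | Submodule.span k (vfun '' Set.Iio o) = ⊤} hex
    with hOdef
  have hOtop : Submodule.span k (vfun '' Set.Iio O) = ⊤ := Ordinal.lt_wf.min_mem _ hex
  have hOlt : ∀ o < O, Submodule.span k (vfun '' Set.Iio o) ≠ ⊤ :=
    fun o ho h => Ordinal.lt_wf.not_lt_min _ h ho
  refine ⟨O.ToType, inferInstance, (inferInstance : WellFoundedLT O.ToType).wf, ?_⟩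
  let e : O.ToType ≃o Set.Iio O := (Ordinal.ToType.mk (o := O)).symm
  let fam : O.ToType → V := fun i => vfun (e i)
  have heO : ∀ i : O.ToType, ((e i : Set.Iio O) : Ordinal.{v}) < O := fun i => (e i).2
  have hfam_notmem : ∀ i, fam i ∉ Submodule.span k (fam '' Set.Iio i) := by
    intro i hmem'
    have hsub : fam '' Set.Iio i ⊆ vfun '' Set.Iio ((e i : Set.Iio O) : Ordinal.{v}) := by
      rintro x ⟨j, hj, rfl⟩
      exact ⟨(e j : Set.Iio O), Subtype.coe_lt_coe.2 (e.strictMono hj), rfl⟩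
    exact (hkey _ (hOlt _ (heO i))).1 (Submodule.span_mono hsub hmem')
  have hli : LinearIndependent k fam := li_aux hfam_notmem
  have hsp : ⊤ ≤ Submodule.span k (Set.range fam) := by
    have hr : Set.range fam = vfun '' Set.Iio O := by
      ext x
      constructor
      · rintro ⟨i, rfl⟩; exact ⟨(e i : Set.Iio O), (e i).2, rfl⟩
      · rintro ⟨o, ho, rfl⟩
        exact ⟨e.symm ⟨o, ho⟩, by simp only [fam, OrderIso.apply_symm_apply]⟩
    rw [hr, hOtop]
  let b : Module.Basis O.ToType k V := Module.Basis.mk hli hsp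
  refine ⟨b, ?_⟩
  intro T hT i
  have hb' : ⇑b = fam := Module.Basis.coe_mk _ _
  have h2 := (hkey _ (hOlt _ (heO i))).2 T hT
  rw [hb']
  have hle : Submodule.span k (vfun '' Set.Iio ((e i : Set.Iio O) : Ordinal.{v})) ⊔
      Submodule.span k {vfun ((e i : Set.Iio O) : Ordinal.{v})} ≤
      Submodule.span k (fam '' {j | j ≤ i}) := by
    apply sup_le
    · rw [Submodule.span_le]
      rintro x ⟨o, ho, rfl⟩
      have hoO : o < O := lt_trans ho (heO i)
      have hlt : e.symm ⟨o, hoO⟩ < i := by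
        have := e.symm.strictMono (show (⟨o, hoO⟩ : Set.Iio O) < e i from Subtype.mk_lt_mk.2 ho)
        rwa [OrderIso.symm_apply_apply] at this
      exact Submodule.subset_span ⟨e.symm ⟨o, hoO⟩, le_of_lt hlt,
        by simp only [fam, OrderIso.apply_symm_apply]⟩
    · rw [Submodule.span_le]
      rintro x hx
      rw [Set.mem_singleton_iff] at hx
      subst hx
      exact Submodule.subset_span ⟨i, le_refl i, rfl⟩
  exact hle h2
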